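/- Lower bound of Lemma 4.2 (util): Let β > 0. There is a constant c_β > 0 (independent of x, y) such that whenever y = o(log x) — more precisely whenever every integer of the form p₁^{α₁}···p_j^{α_j} with all αℓ ≤ ⌊(log x)/(Cy)⌋ is at most x, where p₁ < ⋯ < p_j are the primes ≤ y — one has Σ_{n ≤ x, P⁺(n) ≤ y} n^{-β} ≥ c_β ∏_{ℓ=1}^{j} (1 − p_ℓ^{-β})^{-1}. -/

import Mathlib

open Finset

/-- The largest prime factor of `n` (`0` if `n ≤ 1`). -/
def maxPrimeFac (n : ℕ) : ℕ := n.primeFactors.sup id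

private lemma fact_eval {S : Finset ℕ} (hS : ∀ p ∈ S, p.Prime) (f : ℕ → ℕ) {q : ℕ}
    (hq : q ∈ S) : (∏ p ∈ S, p ^ f p).factorization q = f q := by
  rw [Nat.factorization_prod (fun p hp => pow_ne_zero _ (hS p hp).pos.ne')]
  rw [Finset.sum_apply']
  rw [Finset.sum_eq_single q]
  · rw [Nat.Prime.factorization_pow (hS q hq), Finsupp.single_eq_same]
  · intro p hp hpq
    rw [Nat.Prime.factorization_pow (hS p hp), Finsupp.single_eq_of_ne' hpq]
  · exact fun h => absurd hq h

private lemma telescope (N : ℕ) (hN : 1 ≤ N) :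
    ∏ n ∈ Icc 2 N, (1 - ((n : ℝ) ^ 2)⁻¹) = ((N : ℝ) + 1) / (2 * N) := by
  induction N, hN using Nat.le_induction with
  | base => norm_num
  | succ N hN ih =>
    rw [Finset.prod_Icc_succ_top (by omega), ih]
    have h0 : (N : ℝ) ≠ 0 := Nat.cast_ne_zero.mpr (by omega)
    have h1 : ((N : ℝ) + 1) ≠ 0 := by positivity
    push_cast
    field_simp
    ring

private lemma pow_rpow_comm {x : ℝ} (hx : 0 ≤ x) (a : ℕ) (β : ℝ) :
    (x ^ a) ^ (-β) = (x ^ (-β)) ^ a := by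
  rw [← Real.rpow_natCast x a, ← Real.rpow_mul hx, mul_comm, Real.rpow_mul hx,
    Real.rpow_natCast]

/-- Lower bound of Lemma 4.2: for `β > 0` there is `c_β > 0` such that whenever every
integer of the form `∏_{p ≤ y prime} p^{α_p}` with all exponents `α_p ≤ H` is at most
`x`, and `(H+1)β ≥ 2`, one has
`Σ_{n ≤ x, P⁺(n) ≤ y} n^{-β} ≥ c_β ∏_{p ≤ y prime} (1 − p^{-β})⁻¹`. -/
theorem smooth_sum_lower_bound (β : ℝ) (hβ : 0 < β) :
    ∃ c : ℝ, 0 < c ∧ ∀ x y : ℝ, 2 ≤ y → y ≤ x → ∀ H : ℕ,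
      2 ≤ ((H : ℝ) + 1) * β →
      (∀ f : ℕ → ℕ, (∀ p ∈ (Icc 2 ⌊y⌋₊).filter Nat.Prime, f p ≤ H) →
        ((∏ p ∈ (Icc 2 ⌊y⌋₊).filter Nat.Prime, p ^ f p : ℕ) : ℝ) ≤ x) →
      c * ∏ p ∈ (Icc 2 ⌊y⌋₊).filter Nat.Prime, (1 - (p : ℝ) ^ (-β))⁻¹ ≤
        ∑ n ∈ (Icc 1 ⌊x⌋₊).filter (fun n => (maxPrimeFac n : ℝ) ≤ y), (n : ℝ) ^ (-β) := by
  refine ⟨1/2, by norm_num, ?_⟩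
  intro x y hy hyx H hH hbig
  set S := (Icc 2 ⌊y⌋₊).filter Nat.Prime with hSdef
  have hSprime : ∀ p ∈ S, p.Prime := fun p hp => (mem_filter.mp hp).2
  have hy0 : (0:ℝ) ≤ y := by linarith
  -- basic facts about each prime in S
  have hp2R : ∀ p ∈ S, (2:ℝ) ≤ (p:ℝ) := fun p hp => by
    exact_mod_cast (hSprime p hp).two_le
  have hr_pos : ∀ p ∈ S, (0:ℝ) < (p:ℝ) ^ (-β) := fun p hp =>
    Real.rpow_pos_of_pos (by linarith [hp2R p hp]) _
  have hr_lt1 : ∀ p ∈ S, (p:ℝ) ^ (-β) < 1 := fun p hp =>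
    Real.rpow_lt_one_of_one_lt_of_neg (by linarith [hp2R p hp]) (by linarith)
  -- Step A : per-prime geometric series lower bound
  have stepA : ∀ p ∈ S, (1 - ((p:ℝ) ^ 2)⁻¹) * (1 - (p:ℝ) ^ (-β))⁻¹ ≤
      ∑ a ∈ range (H+1), ((p:ℝ) ^ (-β)) ^ a := by
    intro p hp
    have hr0 := hr_pos p hp
    have hr1 := hr_lt1 p hp
    have h1r : (0:ℝ) < 1 - (p:ℝ) ^ (-β) := by linarith
    rw [geom_sum_eq (ne_of_lt hr1), ← neg_div_neg_eq, neg_sub, neg_sub, div_eq_mul_inv]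
    have key : ((p:ℝ) ^ (-β)) ^ (H+1) ≤ ((p:ℝ) ^ 2)⁻¹ := by
      have hx0 : (0:ℝ) ≤ (p:ℝ) := by linarith [hp2R p hp]
      rw [← pow_rpow_comm hx0]
      have h2 : ((p:ℝ) ^ (H+1)) ^ (-β) = (p:ℝ) ^ (-(((H:ℝ)+1) * β)) := by
        rw [← Real.rpow_natCast (p:ℝ) (H+1), ← Real.rpow_mul hx0]
        push_cast
        ring_nf
      rw [h2]
      have h3 : (p:ℝ) ^ (-(((H:ℝ)+1) * β)) ≤ (p:ℝ) ^ (-2 : ℝ) :=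
        Real.rpow_le_rpow_of_exponent_le (by linarith [hp2R p hp]) (by linarith)
      refine h3.trans_eq ?_
      rw [Real.rpow_neg hx0, show ((2:ℝ)) = ((2:ℕ):ℝ) by norm_num, Real.rpow_natCast]
    have := mul_le_mul_of_nonneg_right (sub_le_sub_left key 1)
      (le_of_lt (inv_pos.mpr h1r))
    linarith
  -- Step B : product of the left factors is at least 1/2 times the target product
  have hfloor2 : 2 ≤ ⌊y⌋₊ := Nat.le_floor (by exact_mod_cast hy)
  have half : (1/2 : ℝ) ≤ ∏ p ∈ S, (1 - ((p:ℝ) ^ 2)⁻¹) := by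
    have hsub : S ⊆ Icc 2 ⌊y⌋₊ := filter_subset _ _
    have fnn : ∀ n ∈ Icc 2 ⌊y⌋₊, (0:ℝ) ≤ 1 - ((n:ℝ) ^ 2)⁻¹ := by
      intro n hn
      have h2 : (2:ℝ) ≤ (n:ℝ) := by exact_mod_cast (mem_Icc.mp hn).1
      have : ((n:ℝ) ^ 2)⁻¹ ≤ 1 := by
        rw [inv_le_one_iff₀]; right; nlinarith
      linarith
    have hIccS : ∏ n ∈ Icc 2 ⌊y⌋₊, (1 - ((n:ℝ) ^ 2)⁻¹) ≤
        ∏ p ∈ S, (1 - ((p:ℝ) ^ 2)⁻¹) := by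
      rw [← Finset.prod_sdiff hsub]
      have h1 : ∏ n ∈ Icc 2 ⌊y⌋₊ \ S, (1 - ((n:ℝ) ^ 2)⁻¹) ≤ 1 :=
        Finset.prod_le_one (fun n hn => fnn n (sdiff_subset hn))
          (fun n hn => by
            have h2 : (0:ℝ) < ((n:ℝ) ^ 2)⁻¹ := by
              have := (mem_Icc.mp (sdiff_subset hn)).1
              have : (2:ℝ) ≤ (n:ℝ) := by exact_mod_cast this
              positivity
            linarith)
      have h2 : (0:ℝ) ≤ ∏ p ∈ S, (1 - ((p:ℝ) ^ 2)⁻¹) :=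
        Finset.prod_nonneg (fun p hp => fnn p (hsub hp))
      calc (∏ n ∈ Icc 2 ⌊y⌋₊ \ S, (1 - ((n:ℝ) ^ 2)⁻¹)) * ∏ p ∈ S, (1 - ((p:ℝ) ^ 2)⁻¹)
          ≤ 1 * ∏ p ∈ S, (1 - ((p:ℝ) ^ 2)⁻¹) := mul_le_mul_of_nonneg_right h1 h2
        _ = _ := one_mul _
    refine le_trans ?_ hIccS
    rw [telescope ⌊y⌋₊ (by omega)]
    have hN : (1:ℝ) ≤ (⌊y⌋₊:ℝ) := by exact_mod_cast Nat.one_le_iff_ne_zero.mpr (by omega)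
    rw [div_le_div_iff₀ (by norm_num) (by positivity)]
    linarith
  -- Step C : factor the truncated multiple sum
  classical
  have hPS := Finset.prod_sum S (fun _ => range (H+1)) (fun p a => ((p:ℝ) ^ (-β)) ^ a)
  -- the integer attached to an exponent pattern
  set F : (∀ a ∈ S, ℕ) → ℕ → ℕ := fun g p => if h : p ∈ S then g p h else 0 with hF
  set NN : (∀ a ∈ S, ℕ) → ℕ := fun g => ∏ p ∈ S, p ^ F g p with hNN
  have termEq : ∀ g ∈ S.pi (fun _ => range (H+1)),
      (∏ x ∈ S.attach, ((x.1:ℝ) ^ (-β)) ^ (g x.1 x.2)) = ((NN g : ℕ) : ℝ) ^ (-β) := by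
    intro g hg
    have hcast : ((NN g : ℕ) : ℝ) = ∏ p ∈ S, (p:ℝ) ^ (F g p) := by
      rw [hNN]; push_cast; rfl
    rw [hcast, ← Real.finset_prod_rpow S _ (fun p hp => by positivity) (-β)]
    rw [← Finset.prod_attach S (fun p => ((p:ℝ) ^ (F g p)) ^ (-β))]
    refine Finset.prod_congr rfl (fun z _ => ?_)
    rw [pow_rpow_comm (by positivity : (0:ℝ) ≤ (z.1:ℝ)) (F g z.1) β]
    congr 1
    simp only [hF, dif_pos z.2]
  -- injectivity
  have hFle : ∀ g ∈ S.pi (fun _ => range (H+1)), ∀ p ∈ S, F g p ≤ H := by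
    intro g hg p hp
    have := Finset.mem_pi.mp hg p hp
    simp only [hF, dif_pos hp]
    exact Nat.lt_succ_iff.mp (mem_range.mp this)
  -- injectivity of the pattern-to-integer map
  have hinj : ∀ g ∈ S.pi (fun _ => range (H+1)), ∀ g' ∈ S.pi (fun _ => range (H+1)),
      NN g = NN g' → g = g' := by
    intro g hg g' hg' h
    funext q hq
    have h1 : (NN g).factorization q = F g q := fact_eval hSprime (F g) hq
    have h2 : (NN g').factorization q = F g' q := fact_eval hSprime (F g') hq
    rw [h, h2] at h1
    simpa only [hF, dif_pos hq] using h1.symm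
  -- the image lands in the smooth-number sum range
  have himg : ∀ g ∈ S.pi (fun _ => range (H+1)),
      NN g ∈ (Icc 1 ⌊x⌋₊).filter (fun n => (maxPrimeFac n : ℝ) ≤ y) := by
    intro g hg
    have hpos : 0 < NN g := Finset.prod_pos (fun p hp => pow_pos (hSprime p hp).pos _)
    have hlef : NN g ≤ ⌊x⌋₊ := Nat.le_floor (hbig (F g) (hFle g hg))
    refine mem_filter.mpr ⟨mem_Icc.mpr ⟨hpos, hlef⟩, ?_⟩
    have hsup : maxPrimeFac (NN g) ≤ ⌊y⌋₊ := by
      refine Finset.sup_le fun q hq => ?_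
      have hqp : q.Prime := Nat.prime_of_mem_primeFactors hq
      have hqd : q ∣ NN g := Nat.dvd_of_mem_primeFactors hq
      obtain ⟨p, hpS, hdvd⟩ := hqp.prime.exists_mem_finset_dvd hqd
      have heq : q = p := (Nat.prime_dvd_prime_iff_eq hqp (hSprime p hpS)).mp
        (hqp.prime.dvd_of_dvd_pow hdvd)
      subst heq
      exact (mem_Icc.mp (mem_filter.mp hpS).1).2
    calc ((maxPrimeFac (NN g) : ℕ) : ℝ) ≤ (⌊y⌋₊ : ℝ) := by exact_mod_cast hsup
      _ ≤ y := Nat.floor_le hy0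
  -- sum over patterns is at most the smooth sum
  have hsum1 : ∑ g ∈ S.pi (fun _ => range (H+1)), ((NN g : ℕ) : ℝ) ^ (-β)
      ≤ ∑ n ∈ (Icc 1 ⌊x⌋₊).filter (fun n => (maxPrimeFac n : ℝ) ≤ y), (n : ℝ) ^ (-β) := by
    rw [← Finset.sum_image (g := NN) (f := fun n : ℕ => (n : ℝ) ^ (-β)) hinj]
    refine Finset.sum_le_sum_of_subset_of_nonneg ?_
      (fun n _ _ => Real.rpow_nonneg (by positivity) _)
    intro n hn
    obtain ⟨g, hg, rfl⟩ := Finset.mem_image.mp hn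
    exact himg g hg
  -- assemble
  have lhs_nn : ∀ p ∈ S, (0:ℝ) ≤ (1 - ((p:ℝ) ^ 2)⁻¹) * (1 - (p:ℝ) ^ (-β))⁻¹ := by
    intro p hp
    have h1 : ((p:ℝ) ^ 2)⁻¹ ≤ 1 := by
      rw [inv_le_one_iff₀]; right; nlinarith [hp2R p hp]
    have h2 := hr_lt1 p hp
    have h3 : (0:ℝ) ≤ (1 - (p:ℝ) ^ (-β))⁻¹ := by
      have : (0:ℝ) < 1 - (p:ℝ) ^ (-β) := by linarith
      positivity
    exact mul_nonneg (by linarith) h3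
  calc (1/2 : ℝ) * ∏ p ∈ S, (1 - (p:ℝ) ^ (-β))⁻¹
      ≤ (∏ p ∈ S, (1 - ((p:ℝ) ^ 2)⁻¹)) * ∏ p ∈ S, (1 - (p:ℝ) ^ (-β))⁻¹ := by
        refine mul_le_mul_of_nonneg_right half (Finset.prod_nonneg fun p hp => ?_)
        have h2 := hr_lt1 p hp
        have : (0:ℝ) < 1 - (p:ℝ) ^ (-β) := by linarith
        positivity
    _ = ∏ p ∈ S, ((1 - ((p:ℝ) ^ 2)⁻¹) * (1 - (p:ℝ) ^ (-β))⁻¹) :=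
        (Finset.prod_mul_distrib).symm
    _ ≤ ∏ p ∈ S, ∑ a ∈ range (H+1), ((p:ℝ) ^ (-β)) ^ a :=
        Finset.prod_le_prod lhs_nn stepA
    _ = ∑ g ∈ S.pi (fun _ => range (H+1)),
          ∏ z ∈ S.attach, ((z.1:ℝ) ^ (-β)) ^ (g z.1 z.2) := hPS
    _ = ∑ g ∈ S.pi (fun _ => range (H+1)), ((NN g : ℕ) : ℝ) ^ (-β) :=
        Finset.sum_congr rfl termEq
    _ ≤ _ := hsum1
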